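/- Let γ be an irrational real number. For every ε > 0, the set E = {τ ∈ ℝ : sqrt(dist(τ, ℤ)² + dist(γτ, ℤ)²) < ε} is relatively dense in ℝ, where dist(x, ℤ) denotes the distance from x to the nearest integer. -/

import Mathlib

/-- A set `E ⊆ ℝ` is relatively dense if there is `l > 0` such that every interval
`[a, a + l]` contains a point of `E`. -/
def RelativelyDense (E : Set ℝ) : Prop :=
  ∃ l > (0 : ℝ), ∀ a : ℝ, ∃ τ ∈ E, τ ∈ Set.Icc a (a + l)

/-- The distance from a real number to the nearest integer. -/
noncomputable def distToInt (x : ℝ) : ℝ := |x - round x|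

lemma abs_sub_round_le_abs (y : ℝ) : |y - round y| ≤ |y| := by
  rw [abs_sub_round_eq_min]
  rcases le_or_gt 0 y with hy | hy
  · refine le_trans (min_le_left _ _) ?_
    rw [abs_of_nonneg hy]
    have h0 : (0:ℝ) ≤ (⌊y⌋ : ℝ) := by exact_mod_cast Int.floor_nonneg.mpr hy
    have : Int.fract y = y - ⌊y⌋ := rfl
    rw [this]; linarith
  · refine le_trans (min_le_right _ _) ?_
    rw [abs_of_neg hy]
    have h1 : (⌊y⌋ : ℝ) ≤ -1 := by
      have : ⌊y⌋ < 0 := Int.floor_lt.mpr (by exact_mod_cast hy)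
      have h2 : ⌊y⌋ ≤ -1 := by omega
      exact_mod_cast h2
    have : Int.fract y = y - ⌊y⌋ := rfl
    rw [this]; linarith
 
lemma distToInt_le (x : ℝ) (z : ℤ) : distToInt x ≤ |x - z| := by
  have h : x - round x = (x - z) - round (x - z) := by
    rw [round_sub_intCast]; push_cast; ring
  rw [distToInt, h]
  exact abs_sub_round_le_abs _

theorem kronecker_relatively_dense (γ : ℝ) (hγ : Irrational γ) (ε : ℝ) (hε : 0 < ε) :
    RelativelyDense
      {τ : ℝ | Real.sqrt (distToInt τ ^ 2 + distToInt (γ * τ) ^ 2) < ε} := by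
  -- Step 1: find q p : ℤ with 0 < q*γ - p < ε
  obtain ⟨n, hn⟩ := exists_nat_gt (1 / ε)
  have hn0 : 0 < n := by
    by_contra h
    push_neg at h
    interval_cases n
    · simp at hn; linarith [one_div_pos.mpr hε, hn]
  obtain ⟨j, k, hk0, hkn, hjk⟩ := Real.exists_int_int_abs_mul_sub_le γ hn0
  have hsmall : |(k : ℝ) * γ - j| < ε := by
    refine hjk.trans_lt ?_
    rw [div_lt_iff₀ (by positivity)]
    have h1 : (1:ℝ)/ε < n := hn
    have h2 : (1:ℝ) < ε * n := by
      rw [div_lt_iff₀ hε] at h1; linarith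
    nlinarith
  have hne : (k : ℝ) * γ - j ≠ 0 := by
    intro h
    have hk : (k : ℝ) ≠ 0 := by exact_mod_cast hk0.ne'
    apply hγ
    exact ⟨(j : ℚ) / (k : ℚ), by
      push_cast
      field_simp
      linarith [sub_eq_zero.mp h]⟩
  have key : ∃ q p : ℤ, 0 < (q : ℝ) * γ - p ∧ (q : ℝ) * γ - p < ε := by
    rcases hne.lt_or_gt with h | h
    · refine ⟨-k, -j, ?_, ?_⟩ <;> push_cast <;>
        [linarith; (rw [abs_of_neg h] at hsmall; linarith)]
    · exact ⟨k, j, h, by rw [abs_of_pos h] at hsmall; linarith⟩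
  obtain ⟨q, p, hβ0, hβε⟩ := key
  set β : ℝ := (q : ℝ) * γ - p with hβ
  have hγq : (q : ℝ) * γ = p + β := by rw [hβ]; ring
  -- Step 2: relative density with l = 1 + |q|/β
  refine ⟨1 + |(q : ℝ)| / β, by positivity, fun a => ?_⟩
  set s : ℝ := (q : ℝ)
  set m : ℤ := ⌈a - min 0 (s / β)⌉ with hm
  set t : ℝ := 1 - Int.fract (γ * m) with ht
  have ht0 : 0 < t := by
    have := Int.fract_lt_one (γ * m); rw [ht]; linarith
  have ht1 : t ≤ 1 := by
    have := Int.fract_nonneg (γ * m); rw [ht]; linarith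
  set K : ℤ := ⌊t / β⌋ with hK
  have hK0 : 0 ≤ K := Int.floor_nonneg.mpr (by positivity)
  have hKle : (K : ℝ) ≤ 1 / β := by
    refine (Int.floor_le _).trans ?_
    gcongr
  have hKβle : (K : ℝ) * β ≤ t := by
    have := Int.floor_le (t / β)
    calc (K : ℝ) * β ≤ (t / β) * β := by nlinarith
    _ = t := by field_simp
  have hKβgt : t - β < (K : ℝ) * β := by
    have := Int.lt_floor_add_one (t / β)
    have h3 := (div_lt_iff₀ hβ0).mp this
    nlinarith
  refine ⟨((m + K * q : ℤ) : ℝ), ?_, ?_, ?_⟩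
  · -- membership in E
    show Real.sqrt _ < ε
    have hd1 : distToInt ((m + K * q : ℤ) : ℝ) = 0 := by
      rw [distToInt, round_intCast, sub_self, abs_zero]
    have hd2 : distToInt (γ * ((m + K * q : ℤ) : ℝ)) < ε := by
      have hz : γ * ((m + K * q : ℤ) : ℝ) - ((⌊γ * m⌋ + K * p + 1 : ℤ) : ℝ)
          = (K : ℝ) * β - t := by
        push_cast
        have hfr : Int.fract (γ * m) = γ * m - ⌊γ * m⌋ := rfl
        rw [ht, hfr]
        linear_combination (K : ℝ) * hγq
      refine lt_of_le_of_lt (distToInt_le _ (⌊γ * m⌋ + K * p + 1)) ?_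
      rw [hz, abs_of_nonpos (by linarith), neg_sub]
      linarith
    rw [hd1]
    have : (0:ℝ) ^ 2 + distToInt (γ * ((m + K * q : ℤ) : ℝ)) ^ 2
        = distToInt (γ * ((m + K * q : ℤ) : ℝ)) ^ 2 := by ring
    rw [this, Real.sqrt_sq_eq_abs, abs_of_nonneg (by rw [distToInt]; positivity)]
    exact hd2
  · -- lower bound
    have hma : a - min 0 (s / β) ≤ (m : ℝ) := Int.le_ceil _
    have hks : min 0 (s / β) ≤ (K : ℝ) * s := by
      rcases le_or_gt 0 s with hs | hs
      · refine (min_le_left _ _).trans ?_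
        positivity
      · refine (min_le_right _ _).trans ?_
        rw [div_eq_mul_inv]
        have : (K : ℝ) * s ≥ (1 / β) * s := by nlinarith
        calc s * β⁻¹ = (1 / β) * s := by ring
        _ ≤ (K : ℝ) * s := this
    push_cast
    linarith
  · -- upper bound
    have hma : (m : ℝ) < a - min 0 (s / β) + 1 := Int.ceil_lt_add_one _
    have hks : (K : ℝ) * s ≤ max 0 (s / β) := by
      rcases le_or_gt 0 s with hs | hs
      · refine le_trans ?_ (le_max_right _ _)
        rw [div_eq_mul_inv]
        calc (K : ℝ) * s ≤ (1 / β) * s := by nlinarith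
        _ = s * β⁻¹ := by ring
      · refine le_trans ?_ (le_max_left _ _)
        have hK0' : (0:ℝ) ≤ (K : ℝ) := by exact_mod_cast hK0
        exact mul_nonpos_of_nonneg_of_nonpos hK0' hs.le
    have hmaxmin : max 0 (s / β) - min 0 (s / β) = |s| / β := by
      rw [max_sub_min_eq_abs, sub_zero, abs_div, abs_of_pos hβ0]
    push_cast
    linarith
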